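/- Let σ, R, L be positive real numbers. Then: (a) ∫_{R+L}^{∞} exp(−(x−R)²/(2σ²)) dx ≤ √(π/2) · σ · exp(−L²/(2σ²)); (b) for every positive integer k, ∫_{R+L}^{∞} x^{2k} · exp(−(x−R)²/(2σ²)) dx ≤ 3^{2k−1} · exp(−L²/(2σ²)) · √(π/2) · σ · ( R^{2k} + L^{2k} + σ^{2k}·(2k−1)!! ). -/

import Mathlib

open MeasureTheory Real

noncomputable section

private lemma gte_shift_integral (c : ℝ) (f : ℝ → ℝ) :
    ∫ x in Set.Ici c, f (x - c) = ∫ x in Set.Ici (0:ℝ), f x := by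
  rw [← integral_indicator measurableSet_Ici, ← integral_indicator measurableSet_Ici,
    ← integral_sub_right_eq_self (Set.indicator (Set.Ici (0:ℝ)) f) c]
  congr 1
  ext x
  by_cases h : c ≤ x
  · simp [Set.indicator, Set.mem_Ici, h, sub_nonneg.mpr h]
  · simp [Set.indicator, Set.mem_Ici, h, sub_nonneg, not_le.mp h]

private lemma gte_shift_integrable (c : ℝ) (f : ℝ → ℝ) (h : IntegrableOn f (Set.Ici (0:ℝ))) :
    IntegrableOn (fun x => f (x - c)) (Set.Ici c) := by
  rw [← integrable_indicator_iff measurableSet_Ici] at h ⊢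
  have h2 := h.comp_sub_right c
  refine h2.congr (Filter.Eventually.of_forall (fun x => ?_))
  by_cases hx : c ≤ x
  · simp [Set.indicator, Set.mem_Ici, hx, sub_nonneg.mpr hx]
  · simp [Set.indicator, Set.mem_Ici, hx, sub_nonneg, not_le.mp hx]

private lemma gte_dfac_step (k : ℕ) :
    Nat.doubleFactorial (2 * (k+1) - 1) = (2*k+1) * Nat.doubleFactorial (2*k - 1) := by
  cases k with
  | zero => rfl
  | succ m =>
    have h1 : 2 * (m + 1 + 1) - 1 = (2*m+1) + 2 := by omega
    have h2 : 2 * (m+1) - 1 = 2*m+1 := by omega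
    rw [h1, h2, Nat.doubleFactorial_add_two]; ring_nf

private lemma gte_Gamma_half (k : ℕ) :
    Real.Gamma (k + 1/2) = Real.sqrt π * Nat.doubleFactorial (2*k - 1) / 2^k := by
  induction k with
  | zero => simp [Real.Gamma_one_half_eq]; norm_num [Real.Gamma_one_half_eq]
  | succ n ih =>
    have h : ((n:ℝ) + 1) + 1/2 = (n + 1/2) + 1 := by ring
    push_cast
    rw [h, Real.Gamma_add_one (by positivity), ih, gte_dfac_step]
    push_cast
    ring

private lemma gte_gauss_int (σ : ℝ) (hσ : 0 < σ) :
    ∫ x in Set.Ici (0:ℝ), Real.exp (-x^2/(2*σ^2)) = Real.sqrt (π/2) * σ := by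
  rw [MeasureTheory.integral_Ici_eq_integral_Ioi]
  have h : ∀ x : ℝ, -x^2/(2*σ^2) = -((2*σ^2)⁻¹) * x^2 := by
    intro x; field_simp
  simp_rw [h]
  rw [integral_gaussian_Ioi]
  have h2 : π / (2*σ^2)⁻¹ = (π/2) * (2*σ)^2 := by
    field_simp
  rw [h2, Real.sqrt_mul (by positivity), Real.sqrt_sq (by positivity)]
  ring

private lemma gte_moment_int (σ : ℝ) (hσ : 0 < σ) (k : ℕ) :
    ∫ x in Set.Ici (0:ℝ), x^(2*k) * Real.exp (-x^2/(2*σ^2))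
      = Real.sqrt (π/2) * σ^(2*k+1) * Nat.doubleFactorial (2*k - 1) := by
  have hG := gte_Gamma_half k
  rw [MeasureTheory.integral_Ici_eq_integral_Ioi]
  set b : ℝ := (2*σ^2)⁻¹ with hb
  have hbpos : 0 < b := by positivity
  have key := integral_rpow_mul_exp_neg_mul_rpow (p := 2) (q := ((2*k : ℕ) : ℝ))
    (by norm_num) (lt_of_lt_of_le (by norm_num) (Nat.cast_nonneg _)) hbpos
  have hconv : ∫ x in Set.Ioi (0:ℝ), x^(2*k) * Real.exp (-x^2/(2*σ^2))
      = ∫ x in Set.Ioi (0:ℝ), x ^ (((2*k : ℕ) : ℝ)) * Real.exp (-b * x ^ (2:ℝ)) := by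
    refine setIntegral_congr_fun measurableSet_Ioi (fun x hx => ?_)
    rw [Set.mem_Ioi] at hx
    rw [Real.rpow_natCast, Real.rpow_two]
    congr 1
    rw [hb]; field_simp
  rw [hconv, key]
  have hGarg : (((2*k : ℕ) : ℝ) + 1) / 2 = (k : ℝ) + 1/2 := by push_cast; ring
  rw [hGarg, hG]
  have e1 : b ^ (-((((2*k : ℕ) : ℝ)) + 1) / 2) = (2*σ^2) ^ ((((2*k : ℕ) : ℝ) + 1) / 2) := by
    rw [hb, Real.inv_rpow (by positivity), ← Real.rpow_neg (by positivity)]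
    congr 1; ring
  have e2 : (2*σ^2 : ℝ) ^ ((((2*k : ℕ) : ℝ) + 1) / 2) = (Real.sqrt 2 * σ)^(2*k+1) := by
    have h3 : ((((2*k : ℕ) : ℝ)) + 1) / 2 = (1/2) * ((2*k+1 : ℕ) : ℝ) := by push_cast; ring
    rw [h3, Real.rpow_mul (by positivity), Real.rpow_natCast,
      ← Real.sqrt_eq_rpow, Real.sqrt_mul (by norm_num), Real.sqrt_sq hσ.le]
  rw [e1, e2, mul_pow]
  have h2k : (Real.sqrt 2)^(2*k+1) = 2^k * Real.sqrt 2 := by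
    rw [pow_succ, pow_mul, Real.sq_sqrt (by norm_num : (0:ℝ) ≤ 2)]
  have hsd : Real.sqrt (π/2) = Real.sqrt π / Real.sqrt 2 := Real.sqrt_div Real.pi_pos.le 2
  rw [h2k, hsd]
  have h2kne : (2:ℝ)^k ≠ 0 := by positivity
  have hsne : Real.sqrt 2 ≠ 0 := by positivity
  field_simp
  ring_nf
  rw [Real.sq_sqrt (by norm_num : (0:ℝ) ≤ 2)]

private lemma gte_three_pow (a b c : ℝ) (ha : 0 ≤ a) (hb : 0 ≤ b) (hc : 0 ≤ c) (m : ℕ) :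
    (a + b + c)^(m+1) ≤ 3^m * (a^(m+1) + b^(m+1) + c^(m+1)) := by
  have h := pow_sum_div_card_le_sum_pow (s := Finset.range 3)
    (f := fun i => if i = 0 then a else if i = 1 then b else c)
    (fun i _ => by split_ifs <;> assumption) m
  simp [Finset.sum_range_succ] at h
  rw [div_le_iff₀ (by positivity)] at h
  calc (a + b + c)^(m+1) ≤ (a^(m+1) + b^(m+1) + c^(m+1)) * 3^m := h
    _ = 3^m * (a^(m+1) + b^(m+1) + c^(m+1)) := by ring

/-- Lemma B.6: Gaussian tail integral estimates. -/
theorem gaussian_tail_estimates (σ R L : ℝ) (hσ : 0 < σ) (hR : 0 < R) (hL : 0 < L) :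
    (∫ x in Set.Ici (R + L), Real.exp (-(x - R) ^ 2 / (2 * σ ^ 2)) ≤
        Real.sqrt (π / 2) * σ * Real.exp (-L ^ 2 / (2 * σ ^ 2))) ∧
    ∀ k : ℕ, 0 < k →
      ∫ x in Set.Ici (R + L), x ^ (2 * k) * Real.exp (-(x - R) ^ 2 / (2 * σ ^ 2)) ≤
        3 ^ (2 * k - 1) * Real.exp (-L ^ 2 / (2 * σ ^ 2)) * Real.sqrt (π / 2) * σ *
          (R ^ (2 * k) + L ^ (2 * k) + σ ^ (2 * k) * (Nat.doubleFactorial (2 * k - 1))) := by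
  set c : ℝ := R + L with hc
  -- basic integrability facts
  have h_int0 : Integrable (fun y : ℝ => Real.exp (-y^2/(2*σ^2))) := by
    have hb : (0:ℝ) < (2*σ^2)⁻¹ := by positivity
    have h := integrable_exp_neg_mul_sq hb
    have heq : ∀ x : ℝ, -((2*σ^2)⁻¹) * x^2 = -x^2/(2*σ^2) := by intro x; field_simp
    simpa only [heq] using h
  -- pointwise exponential bound
  have h_exp : ∀ x ∈ Set.Ici c, Real.exp (-(x - R)^2/(2*σ^2)) ≤
      Real.exp (-L^2/(2*σ^2)) * Real.exp (-(x-c)^2/(2*σ^2)) := by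
    intro x hx
    rw [Set.mem_Ici] at hx
    have hy : 0 ≤ x - c := sub_nonneg.mpr hx
    rw [← Real.exp_add, Real.exp_le_exp, ← add_div]
    have hnum : -(x - R)^2 ≤ -L^2 + -(x-c)^2 := by
      have : x - R = (x - c) + L := by rw [hc]; ring
      rw [this]
      nlinarith [mul_nonneg hy hL.le]
    gcongr
  constructor
  · -- part (a)
    have hmono := integral_mono_of_nonneg (μ := volume.restrict (Set.Ici c))
      (f := fun x => Real.exp (-(x - R)^2/(2*σ^2)))
      (g := fun x => Real.exp (-L^2/(2*σ^2)) * Real.exp (-(x-c)^2/(2*σ^2)))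
      (ae_of_all _ (fun x => (Real.exp_pos _).le))
      (((h_int0.comp_sub_right c).const_mul _).restrict)
      ((ae_restrict_iff' measurableSet_Ici).mpr (ae_of_all _ h_exp))
    calc ∫ x in Set.Ici c, Real.exp (-(x - R)^2/(2*σ^2))
        ≤ ∫ x in Set.Ici c, Real.exp (-L^2/(2*σ^2)) * Real.exp (-(x-c)^2/(2*σ^2)) := hmono
      _ = Real.exp (-L^2/(2*σ^2)) * ∫ x in Set.Ici c, Real.exp (-(x-c)^2/(2*σ^2)) :=
          integral_const_mul _ _
      _ = Real.exp (-L^2/(2*σ^2)) * ∫ y in Set.Ici (0:ℝ), Real.exp (-y^2/(2*σ^2)) := by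
          rw [gte_shift_integral c (fun y => Real.exp (-y^2/(2*σ^2)))]
      _ = Real.sqrt (π/2) * σ * Real.exp (-L^2/(2*σ^2)) := by
          rw [gte_gauss_int σ hσ]; ring
  · -- part (b)
    intro k hk
    obtain ⟨m, hm⟩ : ∃ m, 2*k = m + 1 := ⟨2*k - 1, by omega⟩
    have hm' : 2*k - 1 = m := by omega
    set g : ℝ → ℝ := fun y => (3:ℝ)^(2*k-1) * Real.exp (-L^2/(2*σ^2)) *
      ((R^(2*k) + L^(2*k)) * Real.exp (-y^2/(2*σ^2)) + y^(2*k) * Real.exp (-y^2/(2*σ^2)))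
      with hg
    have h_int_pow : IntegrableOn (fun y : ℝ => y^(2*k) * Real.exp (-y^2/(2*σ^2)))
        (Set.Ici (0:ℝ)) := by
      rw [integrableOn_Ici_iff_integrableOn_Ioi]
      have hb : (0:ℝ) < (2*σ^2)⁻¹ := by positivity
      have base := integrableOn_rpow_mul_exp_neg_mul_sq hb
        (s := ((2*k : ℕ) : ℝ)) (lt_of_lt_of_le (by norm_num) (Nat.cast_nonneg _))
      refine base.congr_fun (fun x hx => ?_) measurableSet_Ioi
      dsimp only
      rw [Real.rpow_natCast]
      congr 1
      field_simp
    have h_int_g : IntegrableOn g (Set.Ici (0:ℝ)) := by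
      apply Integrable.const_mul
      exact (h_int0.integrableOn.const_mul _).add h_int_pow
    -- pointwise bound
    have h_pt : ∀ x ∈ Set.Ici c, x^(2*k) * Real.exp (-(x - R)^2/(2*σ^2)) ≤ g (x - c) := by
      intro x hx
      have hxm := hx
      rw [Set.mem_Ici] at hxm
      have hy : 0 ≤ x - c := sub_nonneg.mpr hxm
      have hxpow : x^(2*k) ≤ (3:ℝ)^(2*k-1) * (R^(2*k) + L^(2*k) + (x-c)^(2*k)) := by
        have hx' : x = R + L + (x - c) := by rw [hc]; ring
        calc x^(2*k) = (R + L + (x-c))^(2*k) := by rw [← hx']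
          _ ≤ 3^(2*k-1) * (R^(2*k) + L^(2*k) + (x-c)^(2*k)) := by
              rw [hm', hm]
              exact gte_three_pow R L (x-c) hR.le hL.le hy m
      have hE := h_exp x hx
      have hxnn : (0:ℝ) ≤ x := le_trans (by positivity) hxm
      calc x^(2*k) * Real.exp (-(x - R)^2/(2*σ^2))
          ≤ ((3:ℝ)^(2*k-1) * (R^(2*k) + L^(2*k) + (x-c)^(2*k))) *
            (Real.exp (-L^2/(2*σ^2)) * Real.exp (-(x-c)^2/(2*σ^2))) := by
            apply mul_le_mul hxpow hE (Real.exp_pos _).le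
            positivity
        _ = g (x - c) := by rw [hg]; ring
    have hmono := integral_mono_of_nonneg (μ := volume.restrict (Set.Ici c))
      (f := fun x => x^(2*k) * Real.exp (-(x - R)^2/(2*σ^2)))
      (g := fun x => g (x - c))
      (ae_of_all _ (fun x => mul_nonneg ((even_two_mul k).pow_nonneg x) (Real.exp_pos _).le))
      (gte_shift_integrable c g h_int_g)
      ((ae_restrict_iff' measurableSet_Ici).mpr (ae_of_all _ h_pt))
    calc ∫ x in Set.Ici c, x^(2*k) * Real.exp (-(x - R)^2/(2*σ^2))
        ≤ ∫ x in Set.Ici c, g (x - c) := hmono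
      _ = ∫ y in Set.Ici (0:ℝ), g y := gte_shift_integral c g
      _ = (3:ℝ)^(2*k-1) * Real.exp (-L^2/(2*σ^2)) *
          ((R^(2*k) + L^(2*k)) * (Real.sqrt (π/2) * σ) +
            Real.sqrt (π/2) * σ^(2*k+1) * Nat.doubleFactorial (2*k - 1)) := by
          rw [hg]
          rw [integral_const_mul]
          rw [integral_add (h_int0.integrableOn.const_mul _) h_int_pow]
          rw [integral_const_mul, gte_gauss_int σ hσ, gte_moment_int σ hσ k]
      _ = 3^(2*k-1) * Real.exp (-L^2/(2*σ^2)) * Real.sqrt (π/2) * σ *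
          (R^(2*k) + L^(2*k) + σ^(2*k) * Nat.doubleFactorial (2*k - 1)) := by
          ring
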